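/- Let c be a generic linear list, f its piecewise linear map, and i an interior local maximum of c. Let s < c_i ≤ t be real numbers such that no item value other than c_i lies in the closed interval [s, t]. Then the number of connected components of f^{-1}((−∞, t]) equals the number of connected components of f^{-1}((−∞, s]) minus one. -/
import Mathlib


/-- The piecewise linear map determined by the list `c` (on the domain `[1,m]`). -/
noncomputable def plMap (c : ℕ → ℝ) (x : ℝ) : ℝ :=
  c (Int.floor x).toNat +
    (x - (Int.floor x : ℝ)) * (c ((Int.floor x).toNat + 1) - c (Int.floor x).toNat)

/-- The set of points of the domain `[1,m]` with values in `[A,B]`. -/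
def levelBand (m : ℕ) (c : ℕ → ℝ) (A B : ℝ) : Set ℝ :=
  {x : ℝ | x ∈ Set.Icc (1 : ℝ) (m : ℝ) ∧ plMap c x ∈ Set.Icc A B}

/-- The sublevel set of the map at `s`, within the domain `[1,m]`. -/
def sublevel (m : ℕ) (c : ℕ → ℝ) (s : ℝ) : Set ℝ :=
  {x : ℝ | x ∈ Set.Icc (1 : ℝ) (m : ℝ) ∧ plMap c x ≤ s}

/-- The support of the frame spanned by the items `a` and `b`: the connected component
of `f⁻¹([f a, f b])` (within the domain) containing `a`. -/
def frameSupport (m : ℕ) (c : ℕ → ℝ) (a b : ℕ) : Set ℝ :=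
  connectedComponentIn (levelBand m c (c a) (c b)) (a : ℝ)

/-- `W(a,b)` is a triple-panel window of the piecewise linear map of `c`:
`a` and `b` are items with `c a < c b` lying in a common connected component `[x,y]`
of `f⁻¹([c a, c b])`, and the value at the end of the support away from the mirror
equals `c a`. -/
def IsTPW (m : ℕ) (c : ℕ → ℝ) (a b : ℕ) : Prop :=
  1 ≤ a ∧ a ≤ m ∧ 1 ≤ b ∧ b ≤ m ∧ c a < c b ∧
  (b : ℝ) ∈ frameSupport m c a b ∧
  (if a < b then plMap c (sSup (frameSupport m c a b)) = c a
   else plMap c (sInf (frameSupport m c a b)) = c a)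

/-- `i` is an interior local minimum of the list `c`. -/
def IsLocMin (m : ℕ) (c : ℕ → ℝ) (i : ℕ) : Prop :=
  1 < i ∧ i < m ∧ c i < c (i - 1) ∧ c i < c (i + 1)

/-- `i` is an interior local maximum of the list `c`. -/
def IsLocMax (m : ℕ) (c : ℕ → ℝ) (i : ℕ) : Prop :=
  1 < i ∧ i < m ∧ c (i - 1) < c i ∧ c (i + 1) < c i

/-- `i` is a critical item that is a leaf: an endpoint or an interior local minimum. -/
def IsCritLeaf (m : ℕ) (c : ℕ → ℝ) (i : ℕ) : Prop :=
  i = 1 ∨ i = m ∨ IsLocMin m c i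

/-- `i` is a critical item of the list `c`. -/
def IsCritItem (m : ℕ) (c : ℕ → ℝ) (i : ℕ) : Prop :=
  IsCritLeaf m c i ∨ IsLocMax m c i

/-- The set of connected components of `S`. -/
def componentsOf (S : Set ℝ) : Set (Set ℝ) :=
  {C | ∃ x ∈ S, C = connectedComponentIn S x}

namespace S14

lemma plMap_nat (c : ℕ → ℝ) (n : ℕ) : plMap c (n : ℝ) = c n := by
  simp [plMap]

lemma plMap_edge (c : ℕ → ℝ) (k : ℕ) {x : ℝ} (h1 : (k:ℝ) ≤ x) (h2 : x ≤ (k:ℝ) + 1) :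
    plMap c x = c k + (x - k) * (c (k+1) - c k) := by
  rcases eq_or_lt_of_le h2 with he | hlt
  · have hx : x = ((k+1:ℕ):ℝ) := by push_cast; linarith
    rw [hx, plMap_nat]; push_cast; ring
  · have hf : Int.floor x = (k:ℤ) := by
      rw [Int.floor_eq_iff]
      constructor <;> push_cast <;> linarith
    simp [plMap, hf]

lemma nat_mem_sublevel {m k : ℕ} {c : ℕ → ℝ} {u : ℝ} (h1 : 1 ≤ k) (h2 : k ≤ m)
    (h3 : c k ≤ u) : (k:ℝ) ∈ sublevel m c u :=
  ⟨⟨by exact_mod_cast h1, by exact_mod_cast h2⟩, by rw [plMap_nat]; exact h3⟩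

lemma edge_sub (m : ℕ) (c : ℕ → ℝ) (u : ℝ) (k : ℕ) {a b : ℝ}
    (hka : (k:ℝ) ≤ a) (hab : a ≤ b) (hbk : b ≤ (k:ℝ)+1)
    (h1 : 1 ≤ a) (hmb : b ≤ m)
    (hua : plMap c a ≤ u) (hub : plMap c b ≤ u) :
    Set.Icc a b ⊆ sublevel m c u := by
  intro y hy
  obtain ⟨hy1, hy2⟩ := hy
  refine ⟨⟨by linarith, by linarith⟩, ?_⟩
  rw [plMap_edge c k hka (le_trans hab hbk)] at hua
  rw [plMap_edge c k (le_trans hka hab) hbk] at hub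
  rw [plMap_edge c k (by linarith) (by linarith)]
  rcases le_or_gt 0 (c (k+1) - c k) with hd | hd
  · nlinarith [mul_le_mul_of_nonneg_right (show y ≤ b by linarith) hd]
  · nlinarith [mul_le_mul_of_nonpos_right (show a ≤ y by linarith) (le_of_lt hd)]

lemma same_comp {S : Set ℝ} {a b : ℝ} (hab : a ≤ b) (hsub : Set.Icc a b ⊆ S) :
    connectedComponentIn S a = connectedComponentIn S b := by
  have h := isPreconnected_Icc.subset_connectedComponentIn
    (⟨le_refl a, hab⟩ : a ∈ Set.Icc a b) hsub
  exact connectedComponentIn_eq (h ⟨hab, le_refl b⟩)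

def leaders (m : ℕ) (c : ℕ → ℝ) (u : ℝ) : Set ℕ :=
  {k | 1 ≤ k ∧ k ≤ m ∧ c k ≤ u ∧ (k = 1 ∨ u < c (k-1))}

lemma to_leader (m : ℕ) (c : ℕ → ℝ) (u : ℝ) :
    ∀ j, 1 ≤ j → j ≤ m → c j ≤ u →
      ∃ k ∈ leaders m c u, k ≤ j ∧ Set.Icc (k:ℝ) (j:ℝ) ⊆ sublevel m c u := by
  intro j
  induction j with
  | zero => omega
  | succ n ih =>
    intro h1 h2 h3
    by_cases hlead : n + 1 = 1 ∨ u < c n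
    · refine ⟨n+1, ⟨h1, h2, h3, by simpa using hlead⟩, le_refl _, ?_⟩
      rw [Set.Icc_self]
      exact Set.singleton_subset_iff.mpr (nat_mem_sublevel h1 h2 h3)
    · push_neg at hlead
      obtain ⟨hn1, hcn⟩ := hlead
      have hn : 1 ≤ n := by omega
      obtain ⟨k, hk, hkn, hsub⟩ := ih hn (by omega) hcn
      refine ⟨k, hk, by omega, ?_⟩
      have hedge : Set.Icc (n:ℝ) ((n+1:ℕ):ℝ) ⊆ sublevel m c u := by
        apply edge_sub m c u n (le_refl _) (by push_cast; linarith) (by push_cast; linarith)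
          (by exact_mod_cast hn) (by exact_mod_cast h2)
        · rw [plMap_nat]; exact hcn
        · rw [plMap_nat]; exact h3
      have : Set.Icc (k:ℝ) ((n+1:ℕ):ℝ) = Set.Icc (k:ℝ) (n:ℝ) ∪ Set.Icc (n:ℝ) ((n+1:ℕ):ℝ) := by
        rw [Set.Icc_union_Icc_eq_Icc (by exact_mod_cast hkn) (by push_cast; linarith)]
      rw [this]
      exact Set.union_subset hsub hedge

lemma leaders_comp_ne (m : ℕ) (c : ℕ → ℝ) (u : ℝ) {k k' : ℕ}
    (hk : k ∈ leaders m c u) (hk' : k' ∈ leaders m c u) (hlt : k < k') :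
    connectedComponentIn (sublevel m c u) (k:ℝ) ≠
      connectedComponentIn (sublevel m c u) (k':ℝ) := by
  intro heq
  have hkmem : (k:ℝ) ∈ connectedComponentIn (sublevel m c u) (k:ℝ) :=
    mem_connectedComponentIn (nat_mem_sublevel hk.1 hk.2.1 hk.2.2.1)
  have hk'mem : (k':ℝ) ∈ connectedComponentIn (sublevel m c u) (k:ℝ) := by
    rw [heq]; exact mem_connectedComponentIn (nat_mem_sublevel hk'.1 hk'.2.1 hk'.2.2.1)
  have hpc : IsPreconnected (connectedComponentIn (sublevel m c u) (k:ℝ)) :=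
    isPreconnected_connectedComponentIn
  have hicc := hpc.Icc_subset hkmem hk'mem
  have hmem : ((k'-1:ℕ):ℝ) ∈ connectedComponentIn (sublevel m c u) (k:ℝ) := by
    apply hicc
    have h1 : 1 ≤ k' := hk'.1
    constructor
    · push_cast [Nat.cast_sub h1]
      have hle : (k:ℝ) + 1 ≤ (k':ℝ) := by exact_mod_cast hlt
      linarith
    · push_cast [Nat.cast_sub h1]; linarith
  have hsl := connectedComponentIn_subset (sublevel m c u) ((k:ℝ)) hmem
  have hval : c (k'-1) ≤ u := by
    have := hsl.2; rwa [plMap_nat] at this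
  rcases hk'.2.2.2 with h1 | h2
  · have := hk.1; omega
  · linarith

lemma count_eq (m : ℕ) (c : ℕ → ℝ) (u : ℝ) :
    (componentsOf (sublevel m c u)).ncard = (leaders m c u).ncard := by
  have himg : componentsOf (sublevel m c u)
      = (fun k : ℕ => connectedComponentIn (sublevel m c u) (k:ℝ)) '' (leaders m c u) := by
    apply Set.Subset.antisymm
    · rintro C ⟨x, hx, rfl⟩
      have hx1 : (1:ℝ) ≤ x := hx.1.1
      have hxm : x ≤ (m:ℝ) := hx.1.2
      obtain ⟨j, hj1, hjm, hju, hcomp⟩ :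
          ∃ j : ℕ, 1 ≤ j ∧ j ≤ m ∧ c j ≤ u ∧
            connectedComponentIn (sublevel m c u) x
              = connectedComponentIn (sublevel m c u) (j:ℝ) := by
        rcases eq_or_lt_of_le hxm with he | hlt
        · refine ⟨m, by exact_mod_cast hx1.trans he.le, le_refl m, ?_, by rw [← he]⟩
          have := hx.2; rwa [he, plMap_nat] at this
        · set k := (Int.floor x).toNat with hkdef
          have hfl : ((Int.floor x : ℤ):ℝ) ≤ x := Int.floor_le x
          have hfl1 : (1:ℤ) ≤ Int.floor x := by
            apply Int.le_floor.mpr; push_cast; linarith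
          have hzk : (k:ℤ) = Int.floor x := Int.toNat_of_nonneg (by omega)
          have hkx : (k:ℝ) ≤ x := by
            have := hfl; rw [← hzk] at this; exact_mod_cast this
          have hxk : x ≤ (k:ℝ)+1 := by
            have := (Int.lt_floor_add_one x).le
            rw [← hzk] at this; exact_mod_cast this
          have hk1 : 1 ≤ k := by omega
          have hklt : (k:ℝ) < m := lt_of_le_of_lt hkx hlt
          have hkm : k + 1 ≤ m := by
            have : k < m := by exact_mod_cast hklt
            omega
          have hedge : plMap c x = c k + (x - k) * (c (k+1) - c k) := plMap_edge c k hkx hxk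
          have hpx : plMap c x ≤ u := hx.2
          by_cases hck : c k ≤ u
          · refine ⟨k, hk1, by omega, hck, ?_⟩
            have hsub : Set.Icc (k:ℝ) x ⊆ sublevel m c u := by
              apply edge_sub m c u k (le_refl _) hkx hxk (by exact_mod_cast hk1) (by linarith)
              · rw [plMap_nat]; exact hck
              · exact hpx
            exact (same_comp hkx hsub).symm
          · have hck1 : c (k+1) ≤ u := by
              push_neg at hck
              by_contra h
              push_neg at h
              rw [hedge] at hpx
              rcases eq_or_lt_of_le hkx with hxeq | hxgt
              · rw [← hxeq] at hpx; simp at hpx; linarith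
              · nlinarith [mul_pos (sub_pos.mpr hxgt) (sub_pos.mpr h),
                  mul_nonneg (sub_nonneg.mpr hxk) (sub_pos.mpr hck).le]
            refine ⟨k+1, by omega, hkm, hck1, ?_⟩
            have hsub : Set.Icc x ((k:ℝ)+1) ⊆ sublevel m c u := by
              apply edge_sub m c u k hkx hxk (le_refl _) (by linarith)
                (by exact_mod_cast hkm)
              · exact hpx
              · have : ((k:ℝ)+1) = ((k+1:ℕ):ℝ) := by push_cast; ring
                rw [this, plMap_nat]; exact hck1
            have := same_comp hxk hsub
            rw [this]
            congr 1
            push_cast; ring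
      obtain ⟨k, hk, _, hsub⟩ := to_leader m c u j hj1 hjm hju
      refine ⟨k, hk, ?_⟩
      rw [hcomp, (same_comp (by exact_mod_cast ‹k ≤ j›) hsub).symm]
    · rintro C ⟨k, hk, rfl⟩
      exact ⟨(k:ℝ), nat_mem_sublevel hk.1 hk.2.1 hk.2.2.1, rfl⟩
  rw [himg, Set.ncard_image_of_injOn]
  intro k1 hk1 k2 hk2 heq
  by_contra hne
  rcases Nat.lt_or_ge k1 k2 with h | h
  · exact leaders_comp_ne m c u hk1 hk2 h heq
  · have : k2 < k1 := by omega
    exact leaders_comp_ne m c u hk2 hk1 this heq.symm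

end S14

/-- Passing a value of an interior local maximum decreases the number
of connected components of the sublevel set by one. -/
theorem statement14 (m : ℕ) (hm : 2 ≤ m) (c : ℕ → ℝ)
    (hgen : Set.InjOn c (Set.Icc 1 m))
    (i : ℕ) (hi : IsLocMax m c i)
    (s t : ℝ) (hs : s < c i) (ht : c i ≤ t)
    (hgap : ∀ k, 1 ≤ k → k ≤ m → k ≠ i → c k ∉ Set.Icc s t) :
    (componentsOf (sublevel m c t)).ncard + 1 = (componentsOf (sublevel m c s)).ncard := by
  obtain ⟨hi1, him, hL, hR⟩ := hi
  have hst : s < t := lt_of_lt_of_le hs ht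
  -- values other than c i are either below s or above t
  have hout : ∀ k, 1 ≤ k → k ≤ m → k ≠ i → c k < s ∨ t < c k := by
    intro k h1 h2 h3
    have := hgap k h1 h2 h3
    rw [Set.mem_Icc] at this
    push_neg at this
    rcases lt_or_ge (c k) s with h | h
    · exact Or.inl h
    · exact Or.inr (this h)
  have hLs : c (i-1) < s := by
    rcases hout (i-1) (by omega) (by omega) (by omega) with h | h
    · exact h
    · linarith
  have hRs : c (i+1) < s := by
    rcases hout (i+1) (by omega) (by omega) (by omega) with h | h
    · exact h
    · linarith
  rw [S14.count_eq, S14.count_eq]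
  have hnot : i + 1 ∉ S14.leaders m c t := by
    rintro ⟨-, -, -, h | h⟩
    · omega
    · simp only [Nat.add_sub_cancel] at h; linarith
  have hset : S14.leaders m c s = insert (i+1) (S14.leaders m c t) := by
    ext k
    simp only [Set.mem_insert_iff, S14.leaders, Set.mem_setOf_eq]
    constructor
    · rintro ⟨h1, h2, h3, h4⟩
      by_cases hki : k = i + 1
      · exact Or.inl hki
      · refine Or.inr ⟨h1, h2, ?_, ?_⟩
        · have hkne : k ≠ i := by intro h; rw [h] at h3; linarith
          rcases hout k h1 h2 hkne with h | h
          · linarith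
          · linarith
        · by_cases hk1 : k = 1
          · exact Or.inl hk1
          · right
            have h : s < c (k-1) := by
              rcases h4 with h | h
              · exact absurd h hk1
              · exact h
            have hk1i : k - 1 ≠ i := by omega
            rcases hout (k-1) (by omega) (by omega) hk1i with h' | h'
            · linarith
            · exact h'
    · rintro (rfl | ⟨h1, h2, h3, h4⟩)
      · exact ⟨by omega, by omega, le_of_lt hRs, Or.inr (by simpa using hs)⟩
      · refine ⟨h1, h2, ?_, ?_⟩
        · have hkne : k ≠ i := by
            intro hh
            subst hh
            rcases h4 with h' | h'
            · omega
            · linarith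
          rcases hout k h1 h2 hkne with h | h
          · linarith
          · linarith
        · by_cases hk1 : k = 1
          · exact Or.inl hk1
          · right
            have h : t < c (k-1) := by
              rcases h4 with h | h
              · exact absurd h hk1
              · exact h
            by_cases hk1i : k - 1 = i
            · rw [hk1i] at h; linarith
            · rcases hout (k-1) (by omega) (by omega) hk1i with h' | h'
              · linarith
              · linarith
  rw [hset, Set.ncard_insert_of_notMem hnot ((Set.finite_Iic m).subset (fun k hk => hk.2.1))]
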